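/- Let K be a commutative ring containing ℚ and let p ∈ K[x₁,…,xₙ, y₁,…,yₙ] be a polynomial satisfying ∂p/∂xᵢ = ∂p/∂yᵢ for all i = 1,…,n. Then there exists a polynomial q ∈ K[t₁,…,tₙ] with p(x,y) = q(x₁+y₁, …, xₙ+yₙ). Conversely every such q(x+y) satisfies the equations. (This is the polynomial model of the statement that the kernel of the Grothendieck connection D_G = d + R, with R = −Σ dxⁱ ∂/∂yⁱ for the trivial formal exponential map φ(x,y) = x + y, consists exactly of Taylor expansions Tφ*f of globally defined functions.) -/

import Mathlib

open MvPolynomial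

section Aux

variable {K : Type*} [CommRing K] {σ : Type*}

/-- coefficient formula for `pderiv`. -/
lemma coeff_pderiv_aux [DecidableEq σ] (i : σ) (p : MvPolynomial σ K) (m : σ →₀ ℕ) :
    coeff m (pderiv i p) = coeff (m + Finsupp.single i 1) p * (m i + 1) := by
  induction p using MvPolynomial.induction_on' with
  | monomial s a =>
      rw [pderiv_monomial]
      by_cases hs : s = m + Finsupp.single i 1
      · subst hs
        have h1 : (m + Finsupp.single i 1) - Finsupp.single i 1 = m := by
          ext j
          rcases eq_or_ne i j with rfl | hij
          · simp
          · simp [Finsupp.single_apply, hij]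
        rw [h1]
        simp [coeff_monomial, Finsupp.single_apply]
      · have hR : coeff (m + Finsupp.single i 1) (monomial s a) = 0 := by
          rw [coeff_monomial, if_neg hs]
        rw [hR, zero_mul]
        by_cases hsi : s i = 0
        · simp [coeff_monomial, hsi]
        · have hne : s - Finsupp.single i 1 ≠ m := by
            intro h
            apply hs
            ext j
            have hj := DFunLike.congr_fun h j
            rcases eq_or_ne i j with rfl | hij
            · simp [Finsupp.single_apply, Finsupp.sub_apply] at hj ⊢
              omega
            · simp [Finsupp.single_apply, Finsupp.sub_apply, hij] at hj ⊢
              omega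
          rw [coeff_monomial, if_neg hne]
  | add p q hp hq => simp [hp, hq, add_mul]

lemma coeff_eq_zero_of_pderiv_eq_zero [Algebra ℚ K] [DecidableEq σ] (i : σ)
    (p : MvPolynomial σ K) (h : pderiv i p = 0) (d : σ →₀ ℕ) (hd : d i ≠ 0) :
    coeff d p = 0 := by
  set m : σ →₀ ℕ := d - Finsupp.single i 1 with hm
  have hdm : d = m + Finsupp.single i 1 := by
    ext j
    rcases eq_or_ne i j with rfl | hij
    · simp [hm]
      omega
    · simp [hm, Finsupp.single_apply, hij]
  have h0 : coeff m (pderiv i p) = 0 := by rw [h]; simp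
  rw [coeff_pderiv_aux] at h0
  have hu : ((m i : K) + 1) = algebraMap ℚ K ((m i : ℚ) + 1) := by
    simp
  rw [hu] at h0
  have hne : ((m i : ℚ) + 1) ≠ 0 := by positivity
  rw [hdm]
  calc coeff (m + Finsupp.single i 1) p
      = coeff (m + Finsupp.single i 1) p * algebraMap ℚ K ((m i : ℚ) + 1) *
          algebraMap ℚ K ((m i : ℚ) + 1)⁻¹ := by
        rw [mul_assoc, ← map_mul, mul_inv_cancel₀ hne, map_one, mul_one]
    _ = 0 := by rw [h0, zero_mul]

lemma not_mem_vars_of_pderiv_eq_zero [Algebra ℚ K] (i : σ)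
    (p : MvPolynomial σ K) (h : pderiv i p = 0) : i ∉ p.vars := by
  classical
  intro hv
  obtain ⟨d, hd, hdi⟩ := (mem_vars i).mp hv
  exact (MvPolynomial.mem_support_iff.mp hd)
    (coeff_eq_zero_of_pderiv_eq_zero i p h d (Finsupp.mem_support_iff.mp hdi))

end Aux

section Main

variable {K : Type*} [CommRing K] {n : ℕ}

/-- The substitution `x ↦ x + y`, `y ↦ y`. -/
noncomputable def Fsub (n : ℕ) (K : Type*) [CommRing K] :
    MvPolynomial (Fin n ⊕ Fin n) K →ₐ[K] MvPolynomial (Fin n ⊕ Fin n) K :=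
  aeval (Sum.elim (fun i => X (Sum.inl i) + X (Sum.inr i)) (fun i => X (Sum.inr i)))

/-- The substitution `x ↦ x - y`, `y ↦ y`. -/
noncomputable def Gsub (n : ℕ) (K : Type*) [CommRing K] :
    MvPolynomial (Fin n ⊕ Fin n) K →ₐ[K] MvPolynomial (Fin n ⊕ Fin n) K :=
  aeval (Sum.elim (fun i => X (Sum.inl i) - X (Sum.inr i)) (fun i => X (Sum.inr i)))

lemma GF_eq_id (p : MvPolynomial (Fin n ⊕ Fin n) K) : Gsub n K (Fsub n K p) = p := by
  have : (Gsub n K).comp (Fsub n K) = AlgHom.id K _ := by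
    apply MvPolynomial.algHom_ext
    rintro (i | i) <;> simp [Fsub, Gsub]
  calc Gsub n K (Fsub n K p) = ((Gsub n K).comp (Fsub n K)) p := rfl
    _ = p := by rw [this]; rfl

lemma FG_eq_id (p : MvPolynomial (Fin n ⊕ Fin n) K) : Fsub n K (Gsub n K p) = p := by
  have : (Fsub n K).comp (Gsub n K) = AlgHom.id K _ := by
    apply MvPolynomial.algHom_ext
    rintro (i | i) <;> simp [Fsub, Gsub]
  calc Fsub n K (Gsub n K p) = ((Fsub n K).comp (Gsub n K)) p := rfl
    _ = p := by rw [this]; rfl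

lemma pderiv_inl_F (i : Fin n) (P : MvPolynomial (Fin n ⊕ Fin n) K) :
    pderiv (Sum.inl i) (Fsub n K P) = Fsub n K (pderiv (Sum.inl i) P) := by
  induction P using MvPolynomial.induction_on with
  | C a => simp [Fsub]
  | add p q hp hq => simp [hp, hq]
  | mul_X p j hp =>
      rw [map_mul, pderiv_mul, pderiv_mul, map_add, map_mul, map_mul, hp]
      congr 1
      cases j with
      | inl j =>
          by_cases hij : j = i
          · subst hij; simp [Fsub]
          · simp [Fsub, pderiv_X_of_ne (show Sum.inl j ≠ Sum.inl i by simpa),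
              pderiv_X_of_ne (show Sum.inl j ≠ Sum.inr i by simp),
              pderiv_X_of_ne (show Sum.inr j ≠ Sum.inl i by simp)]
      | inr j => simp [Fsub, pderiv_X_of_ne (show Sum.inr j ≠ Sum.inl i by simp)]

lemma pderiv_inr_F (i : Fin n) (P : MvPolynomial (Fin n ⊕ Fin n) K) :
    pderiv (Sum.inr i) (Fsub n K P) =
      Fsub n K (pderiv (Sum.inl i) P + pderiv (Sum.inr i) P) := by
  induction P using MvPolynomial.induction_on with
  | C a => simp [Fsub]
  | add p q hp hq =>
      rw [map_add, map_add, hp, hq, ← map_add]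
      congr 1
      simp only [map_add]
      abel
  | mul_X p j hp =>
      have hx : pderiv (Sum.inr i) (Fsub n K (X j)) =
          Fsub n K (pderiv (Sum.inl i) (X j) + pderiv (Sum.inr i) (X j)) := by
        cases j with
        | inl j =>
            by_cases hij : j = i
            · subst hij; simp [Fsub]
            · simp [Fsub, pderiv_X_of_ne (show Sum.inl j ≠ Sum.inl i by simpa),
                pderiv_X_of_ne (show Sum.inl j ≠ Sum.inr i by simp),
                pderiv_X_of_ne (show Sum.inr j ≠ Sum.inl i by simp),
                pderiv_X_of_ne (show Sum.inr j ≠ Sum.inr i by simpa)]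
        | inr j =>
            by_cases hij : j = i
            · subst hij; simp [Fsub]
            · simp [Fsub, pderiv_X_of_ne (show Sum.inr j ≠ Sum.inl i by simp),
                pderiv_X_of_ne (show Sum.inr j ≠ Sum.inr i by simpa)]
      simp only [map_mul, pderiv_mul, map_add, hp, hx]
      ring

end Main

/-- Over a commutative ring `K` containing `ℚ`, a polynomial
`p ∈ K[x₁,…,xₙ,y₁,…,yₙ]` satisfies `∂p/∂xᵢ = ∂p/∂yᵢ` for all `i` if and only if
there is a polynomial `q ∈ K[t₁,…,tₙ]` with `p(x,y) = q(x+y)` (the kernel of the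
Grothendieck connection for the trivial formal exponential map consists exactly of
the Taylor expansions of global functions). -/
theorem grothendieck_kernel_polynomial
    {K : Type*} [CommRing K] [Algebra ℚ K] (n : ℕ)
    (p : MvPolynomial (Fin n ⊕ Fin n) K) :
    (∀ i : Fin n,
        MvPolynomial.pderiv (Sum.inl i) p = MvPolynomial.pderiv (Sum.inr i) p) ↔
      ∃ q : MvPolynomial (Fin n) K,
        p = MvPolynomial.aeval
          (fun i : Fin n =>
            MvPolynomial.X (Sum.inl i) + MvPolynomial.X (Sum.inr i)) q := by
  constructor
  · intro h
    set P := Gsub n K p with hP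
    have hFP : Fsub n K P = p := FG_eq_id p
    have hzero : ∀ i : Fin n, pderiv (Sum.inr i) P = 0 := by
      intro i
      have h1 : Fsub n K (pderiv (Sum.inl i) P) =
          Fsub n K (pderiv (Sum.inl i) P + pderiv (Sum.inr i) P) := by
        rw [← pderiv_inl_F, ← pderiv_inr_F, hFP, h i]
      have h2 := congrArg (Gsub n K) h1
      rw [GF_eq_id, GF_eq_id] at h2
      have := h2.symm
      rwa [left_eq_add] at h2
    have hvars : ↑P.vars ⊆ Set.range (Sum.inl : Fin n → Fin n ⊕ Fin n) := by
      intro j hj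
      cases j with
      | inl j => exact ⟨j, rfl⟩
      | inr j =>
          exact absurd hj (not_mem_vars_of_pderiv_eq_zero _ P (hzero j))
    obtain ⟨q, hq⟩ := exists_rename_eq_of_vars_subset_range P Sum.inl
      Sum.inl_injective hvars
    refine ⟨q, ?_⟩
    rw [← hFP, ← hq, Fsub, aeval_rename]
    rfl
  · rintro ⟨q, rfl⟩
    intro i
    have hR : aeval (fun i : Fin n => (X (Sum.inl i) + X (Sum.inr i) :
        MvPolynomial (Fin n ⊕ Fin n) K)) q = Fsub n K (rename Sum.inl q) := by
      rw [Fsub, aeval_rename]; rfl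
    rw [hR, pderiv_inl_F, pderiv_inr_F]
    have h0 : pderiv (Sum.inr i) (rename (Sum.inl : Fin n → Fin n ⊕ Fin n) q) = 0 := by
      classical
      apply pderiv_eq_zero_of_notMem_vars
      intro hmem
      have := vars_rename Sum.inl q hmem
      simp at this
    rw [h0, add_zero]
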